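/- arXiv:2102.01965 — 4 statements merged into one kernel-verified Lean document; each statement's English description precedes it below -/
import Mathlib

section
/- Let Λ = {(W_j, Λ_j, v_j)}_{j∈J} be a g-fusion frame for H with upper bound D and let T_j : H → H_j be bounded operators such that {v_j² P_{W_j} Λ_j* T_j}_{j∈J} is a resolution of the identity operator on H. Then for all f ∈ H, (1/D)‖Σ_{j∈J} v_j² P_{W_j} Λ_j* T_j f‖² ≤ Σ_{j∈J} v_j² ‖T_j f‖². -/
open ContinuousLinearMap

noncomputable def proj {E : Type*} [NormedAddCommGroup E] [InnerProductSpace ℂ E]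
    (W : Submodule ℂ E) [CompleteSpace W] : E →L[ℂ] E :=
  W.subtypeL.comp (Submodule.orthogonalProjection W)

/-- if {v_j² P_{W_j} Λ_j* T_j} is a resolution of the identity, then
(1/D)‖Σ_j v_j² P_{W_j} Λ_j* T_j f‖² ≤ Σ_j v_j² ‖T_j f‖². -/
theorem stmt2 {ι E : Type*} [NormedAddCommGroup E] [InnerProductSpace ℂ E] [CompleteSpace E]
    {G : ι → Type*} [∀ j, NormedAddCommGroup (G j)] [∀ j, InnerProductSpace ℂ (G j)]
    [∀ j, CompleteSpace (G j)]
    (W : ι → Submodule ℂ E) [∀ j, CompleteSpace (W j)]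
    (v : ι → ℝ) (hv : ∀ j, 0 < v j)
    (Λ : ∀ j, E →L[ℂ] G j)
    (C D : ℝ) (hC : 0 < C) (hCD : C ≤ D)
    (hsum : ∀ f : E, Summable fun j => (v j) ^ 2 * ‖Λ j (proj (W j) f)‖ ^ 2)
    (hframe : ∀ f : E,
      C * ‖f‖ ^ 2 ≤ ∑' j, (v j) ^ 2 * ‖Λ j (proj (W j) f)‖ ^ 2 ∧
      ∑' j, (v j) ^ 2 * ‖Λ j (proj (W j) f)‖ ^ 2 ≤ D * ‖f‖ ^ 2)
    (T : ∀ j, E →L[ℂ] G j)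
    (hres : ∀ f : E, HasSum
      (fun j => (v j) ^ 2 • proj (W j) (ContinuousLinearMap.adjoint (Λ j) (T j f))) f) :
    ∀ f : E,
      ENNReal.ofReal (1 / D *
        ‖∑' j, (v j) ^ 2 • proj (W j) (ContinuousLinearMap.adjoint (Λ j) (T j f))‖ ^ 2) ≤
      ∑' j, ENNReal.ofReal ((v j) ^ 2 * ‖T j f‖ ^ 2) := by
  intro f
  have hD : (0:ℝ) < D := hC.trans_le hCD
  by_cases htop : ∑' j, ENNReal.ofReal ((v j) ^ 2 * ‖T j f‖ ^ 2) = ⊤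
  · rw [htop]; exact le_top
  have hBnn : ∀ j, 0 ≤ (v j) ^ 2 * ‖T j f‖ ^ 2 := fun j => by positivity
  have hBsum : Summable fun j => (v j) ^ 2 * ‖T j f‖ ^ 2 := by
    have h := ENNReal.summable_toReal htop
    simpa [ENNReal.toReal_ofReal (hBnn _)] using h
  rw [← ENNReal.ofReal_tsum_of_nonneg hBnn hBsum]
  apply ENNReal.ofReal_le_ofReal
  rw [(hres f).tsum_eq]
  -- main real inequality : (1/D) ‖f‖² ≤ ∑' B
  set A : ι → ℝ := fun j => (v j) ^ 2 * ‖Λ j (proj (W j) f)‖ ^ 2 with hA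
  set B : ι → ℝ := fun j => (v j) ^ 2 * ‖T j f‖ ^ 2 with hB
  set g : ι → ℂ := fun j =>
    inner ℂ f ((v j) ^ 2 • proj (W j) (ContinuousLinearMap.adjoint (Λ j) (T j f))) with hg
  have hgsum : HasSum g (inner ℂ f f) := (innerSL ℂ f).hasSum (hres f)
  have hgval : ∀ j, g j = ((v j : ℂ)) ^ 2 *
      inner ℂ (Λ j (proj (W j) f)) (T j f) := by
    intro j
    have h1 : g j = ((v j) ^ 2 : ℝ) •
        (inner ℂ f (proj (W j) (ContinuousLinearMap.adjoint (Λ j) (T j f))) : ℂ) :=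
      inner_smul_real_right _ _ _
    have h2 : (inner ℂ f (proj (W j) (ContinuousLinearMap.adjoint (Λ j) (T j f))) : ℂ)
        = inner ℂ (proj (W j) f) (ContinuousLinearMap.adjoint (Λ j) (T j f)) := by
      simp only [_root_.proj, ContinuousLinearMap.coe_comp', Function.comp_apply,
        Submodule.coe_subtypeL', Submodule.coe_subtype]
      exact (Submodule.inner_starProjection_left_eq_right _ _ _).symm
    rw [h1, h2, ContinuousLinearMap.adjoint_inner_right]
    push_cast [Complex.real_smul]
    ring
  have hbound : ∀ j, ‖g j‖ ≤ 1 / (2 * D) * A j + D / 2 * B j := by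
    intro j
    rw [hgval j]
    have h3 : ‖((v j : ℂ)) ^ 2 * inner ℂ (Λ j (proj (W j) f)) (T j f)‖
        = (v j) ^ 2 * ‖(inner ℂ (Λ j (proj (W j) f)) (T j f) : ℂ)‖ := by
      rw [norm_mul, norm_pow, Complex.norm_real, Real.norm_eq_abs, abs_of_pos (hv j)]
    rw [h3]
    have h4 : ‖(inner ℂ (Λ j (proj (W j) f)) (T j f) : ℂ)‖
        ≤ ‖Λ j (proj (W j) f)‖ * ‖T j f‖ := norm_inner_le_norm _ _
    have hv2 : (0:ℝ) ≤ (v j) ^ 2 := sq_nonneg _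
    have h5 : (v j) ^ 2 * ‖(inner ℂ (Λ j (proj (W j) f)) (T j f) : ℂ)‖
        ≤ (v j) ^ 2 * (‖Λ j (proj (W j) f)‖ * ‖T j f‖) := by
      exact mul_le_mul_of_nonneg_left h4 hv2
    have h6 : (v j) ^ 2 * (‖Λ j (_root_.proj (W j) f)‖ * ‖T j f‖)
        ≤ 1 / (2 * D) * A j + D / 2 * B j := by
      have heq : 1 / (2 * D) * A j + D / 2 * B j = (A j + D ^ 2 * B j) / (2 * D) := by
        simp only [hA, hB]; field_simp
      rw [heq, le_div_iff₀ (by positivity)]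
      simp only [hA, hB]
      nlinarith [sq_nonneg (v j * ‖Λ j (_root_.proj (W j) f)‖ - D * (v j * ‖T j f‖))]
    linarith
  have hbsummable : Summable fun j => 1 / (2 * D) * A j + D / 2 * B j :=
    ((hsum f).mul_left _).add (hBsum.mul_left _)
  have hgnorm : Summable fun j => ‖g j‖ :=
    Summable.of_nonneg_of_le (fun j => norm_nonneg _) hbound hbsummable
  have hnf : ‖f‖ ^ 2 ≤ ∑' j, ‖g j‖ := by
    calc ‖f‖ ^ 2 = ‖(inner ℂ f f : ℂ)‖ := by
          rw [inner_self_eq_norm_sq_to_K]; simp [Complex.norm_real]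
      _ = ‖∑' j, g j‖ := by rw [hgsum.tsum_eq]
      _ ≤ ∑' j, ‖g j‖ := norm_tsum_le_tsum_norm hgnorm
  have hAB : ∑' j, ‖g j‖ ≤ 1 / (2 * D) * (∑' j, A j) + D / 2 * (∑' j, B j) := by
    calc ∑' j, ‖g j‖ ≤ ∑' j, (1 / (2 * D) * A j + D / 2 * B j) :=
          Summable.tsum_le_tsum hbound hgnorm hbsummable
      _ = 1 / (2 * D) * (∑' j, A j) + D / 2 * (∑' j, B j) := by
          rw [Summable.tsum_add ((hsum f).mul_left _) (hBsum.mul_left _),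
            tsum_mul_left, tsum_mul_left]
  have hAle : ∑' j, A j ≤ D * ‖f‖ ^ 2 := (hframe f).2
  have hfinal : ‖f‖ ^ 2 ≤ 1 / (2 * D) * (D * ‖f‖ ^ 2) + D / 2 * (∑' j, B j) := by
    have : 1 / (2 * D) * (∑' j, A j) ≤ 1 / (2 * D) * (D * ‖f‖ ^ 2) :=
      mul_le_mul_of_nonneg_left hAle (by positivity)
    linarith
  have h7 : 1 / (2 * D) * (D * ‖f‖ ^ 2) = ‖f‖ ^ 2 / 2 := by
    field_simp
  rw [h7] at hfinal
  have hS : ‖f‖ ^ 2 ≤ D * ∑' j, B j := by linarith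
  rw [one_div, inv_mul_le_iff₀ hD]
  exact hS
end

section
/- Let Λ = {(W_j, Λ_j, v_j)}_{j∈J} be a g-fusion frame for H with bounds C, D, and T_j : H → H_j bounded operators with E = sup_j ‖T_j‖² < ∞ such that {v_j² P_{W_j} Λ_j* T_j}_{j∈J} is a resolution of the identity on H and T_j* Λ_j P_{W_j} = T_j for all j. Then (1/D)‖f‖² ≤ Σ_{j∈J} v_j² ‖T_j f‖² ≤ D·E·‖f‖² for all f ∈ H. -/
open ContinuousLinearMap

/-- with E = sup_j ‖T_j‖², resolution of identity and T_j* Λ_j P_{W_j} = T_j,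
one gets (1/D)‖f‖² ≤ Σ_j v_j² ‖T_j f‖² ≤ D·E·‖f‖². (Here all operators act on H, as the
hypothesis T_j* Λ_j P_{W_j} = T_j forces H_j = H.) -/
theorem stmt3 {ι E : Type*} [NormedAddCommGroup E] [InnerProductSpace ℂ E] [CompleteSpace E]
    (W : ι → Submodule ℂ E) [∀ j, CompleteSpace (W j)]
    (v : ι → ℝ) (hv : ∀ j, 0 < v j)
    (Λ : ι → E →L[ℂ] E)
    (C D : ℝ) (hC : 0 < C) (hCD : C ≤ D)
    (hsum : ∀ f : E, Summable fun j => (v j) ^ 2 * ‖Λ j (proj (W j) f)‖ ^ 2)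
    (hframe : ∀ f : E,
      C * ‖f‖ ^ 2 ≤ ∑' j, (v j) ^ 2 * ‖Λ j (proj (W j) f)‖ ^ 2 ∧
      ∑' j, (v j) ^ 2 * ‖Λ j (proj (W j) f)‖ ^ 2 ≤ D * ‖f‖ ^ 2)
    (T : ι → E →L[ℂ] E)
    (Ebd : ℝ) (hEbd : ∀ j, ‖T j‖ ^ 2 ≤ Ebd)
    (hres : ∀ f : E, HasSum
      (fun j => (v j) ^ 2 • proj (W j) (ContinuousLinearMap.adjoint (Λ j) (T j f))) f)
    (hT : ∀ j, (ContinuousLinearMap.adjoint (T j)).comp ((Λ j).comp (proj (W j))) = T j) :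
    ∀ f : E,
      Summable (fun j => (v j) ^ 2 * ‖T j f‖ ^ 2) ∧
      1 / D * ‖f‖ ^ 2 ≤ ∑' j, (v j) ^ 2 * ‖T j f‖ ^ 2 ∧
      ∑' j, (v j) ^ 2 * ‖T j f‖ ^ 2 ≤ D * Ebd * ‖f‖ ^ 2 := by
  have hD : (0:ℝ) < D := lt_of_lt_of_le hC hCD
  intro f
  rcases isEmpty_or_nonempty ι with hι | hι
  · have hf : f = 0 := (hres f).unique hasSum_empty
    subst hf
    refine ⟨summable_empty, ?_, ?_⟩ <;> simp [tsum_empty]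
  have hEbd0 : (0:ℝ) ≤ Ebd := le_trans (sq_nonneg _) (hEbd (Classical.arbitrary ι))
  -- pointwise bound ‖T j f‖ ≤ ‖T j‖ * ‖Λ j (_root_.proj (W j) f)‖
  have hTle : ∀ j, ‖T j f‖ ≤ ‖T j‖ * ‖Λ j (_root_.proj (W j) f)‖ := by
    intro j
    conv_lhs => rw [← hT j]
    calc ‖(ContinuousLinearMap.adjoint (T j)) (Λ j (_root_.proj (W j) f))‖
        ≤ ‖ContinuousLinearMap.adjoint (T j)‖ * ‖Λ j (_root_.proj (W j) f)‖ := le_opNorm _ _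
      _ = ‖T j‖ * ‖Λ j (_root_.proj (W j) f)‖ := by rw [ContinuousLinearMap.adjoint.norm_map]
  have hterm : ∀ j, (v j) ^ 2 * ‖T j f‖ ^ 2 ≤ Ebd * ((v j) ^ 2 * ‖Λ j (_root_.proj (W j) f)‖ ^ 2) := by
    intro j
    have h1 : ‖T j f‖ ^ 2 ≤ ‖T j‖ ^ 2 * ‖Λ j (_root_.proj (W j) f)‖ ^ 2 := by
      rw [← mul_pow]; exact pow_le_pow_left₀ (norm_nonneg _) (hTle j) 2
    nlinarith [sq_nonneg (v j), sq_nonneg (‖Λ j (_root_.proj (W j) f)‖), hEbd j,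
      mul_le_mul_of_nonneg_right (hEbd j) (sq_nonneg (‖Λ j (_root_.proj (W j) f)‖))]
  have hST : Summable (fun j => (v j) ^ 2 * ‖T j f‖ ^ 2) :=
    Summable.of_nonneg_of_le
      (fun j => by positivity) hterm ((hsum f).mul_left Ebd)
  refine ⟨hST, ?_, ?_⟩
  -- lower bound
  · have hproj_sa : ∀ j, ContinuousLinearMap.adjoint (_root_.proj (W j)) = _root_.proj (W j) := by
      intro j
      exact (isSelfAdjoint_starProjection (W j))
    have hinner : ∀ j, (inner ℂ f (_root_.proj (W j) ((ContinuousLinearMap.adjoint (Λ j)) (T j f))) : ℂ)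
        = inner ℂ (Λ j (_root_.proj (W j) f)) (T j f) := by
      intro j
      rw [← ContinuousLinearMap.adjoint_inner_left (_root_.proj (W j)), hproj_sa j,
        ContinuousLinearMap.adjoint_inner_right]
    have h1 : HasSum (fun j => ((v j) ^ 2 : ℝ) •
        (inner ℂ (Λ j (_root_.proj (W j) f)) (T j f) : ℂ)) (inner ℂ f f : ℂ) := by
      have := (hres f).mapL (innerSL ℂ f)
      simpa [inner_smul_right, hinner, RCLike.real_smul_eq_coe_smul (K := ℂ)] using this
    have h2 : HasSum (fun j => (v j) ^ 2 *
        Complex.re (inner ℂ (Λ j (_root_.proj (W j) f)) (T j f) : ℂ)) (‖f‖ ^ 2) := by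
      have := h1.mapL Complex.reCLM
      simpa [inner_self_eq_norm_sq_to_K (𝕜 := ℂ), ← Complex.ofReal_pow] using this
    -- bound each real term
    have hbound : ∀ j, (v j) ^ 2 * Complex.re (inner ℂ (Λ j (_root_.proj (W j) f)) (T j f) : ℂ)
        ≤ 1 / (2 * D) * ((v j) ^ 2 * ‖Λ j (_root_.proj (W j) f)‖ ^ 2)
          + D / 2 * ((v j) ^ 2 * ‖T j f‖ ^ 2) := by
      intro j
      set x := ‖Λ j (_root_.proj (W j) f)‖
      set y := ‖T j f‖
      have hre : Complex.re (inner ℂ (Λ j (_root_.proj (W j) f)) (T j f) : ℂ) ≤ x * y := by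
        calc Complex.re (inner ℂ (Λ j (_root_.proj (W j) f)) (T j f) : ℂ)
            ≤ ‖(inner ℂ (Λ j (_root_.proj (W j) f)) (T j f) : ℂ)‖ := Complex.re_le_norm _
          _ ≤ x * y := norm_inner_le_norm _ _
      have hxy : x * y ≤ 1 / (2 * D) * x ^ 2 + D / 2 * y ^ 2 := by
        have h2D : (0:ℝ) < 2 * D := by positivity
        rw [show 1 / (2 * D) * x ^ 2 + D / 2 * y ^ 2 = (x ^ 2 + D ^ 2 * y ^ 2) / (2 * D) by
          field_simp, le_div_iff₀ h2D]
        nlinarith [sq_nonneg (x - D * y)]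
      have hv2 : (0:ℝ) ≤ (v j) ^ 2 := sq_nonneg _
      nlinarith [mul_le_mul_of_nonneg_left (le_trans hre hxy) hv2]
    have hsum2 : Summable (fun j => 1 / (2 * D) * ((v j) ^ 2 * ‖Λ j (_root_.proj (W j) f)‖ ^ 2)
        + D / 2 * ((v j) ^ 2 * ‖T j f‖ ^ 2)) :=
      ((hsum f).mul_left _).add (hST.mul_left _)
    have key : ‖f‖ ^ 2 ≤ 1 / (2 * D) * (∑' j, (v j) ^ 2 * ‖Λ j (_root_.proj (W j) f)‖ ^ 2)
        + D / 2 * (∑' j, (v j) ^ 2 * ‖T j f‖ ^ 2) := by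
      calc ‖f‖ ^ 2 = ∑' j, (v j) ^ 2 * Complex.re (inner ℂ (Λ j (_root_.proj (W j) f)) (T j f) : ℂ) :=
            h2.tsum_eq.symm
        _ ≤ ∑' j, (1 / (2 * D) * ((v j) ^ 2 * ‖Λ j (_root_.proj (W j) f)‖ ^ 2)
              + D / 2 * ((v j) ^ 2 * ‖T j f‖ ^ 2)) :=
            Summable.tsum_le_tsum hbound h2.summable hsum2
        _ = _ := by
            rw [Summable.tsum_add ((hsum f).mul_left _) (hST.mul_left _), tsum_mul_left, tsum_mul_left]
    have hΛ := (hframe f).2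
    have : ‖f‖ ^ 2 ≤ D * (∑' j, (v j) ^ 2 * ‖T j f‖ ^ 2) := by
      have h3 : 1 / (2 * D) * (∑' j, (v j) ^ 2 * ‖Λ j (_root_.proj (W j) f)‖ ^ 2)
          ≤ 1 / (2 * D) * (D * ‖f‖ ^ 2) :=
        mul_le_mul_of_nonneg_left hΛ (by positivity)
      have h4 : 1 / (2 * D) * (D * ‖f‖ ^ 2) = ‖f‖ ^ 2 / 2 := by
        field_simp
      nlinarith [key]
    rw [div_mul_eq_mul_div, one_mul, div_le_iff₀ hD]
    linarith [this]
  -- upper bound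
  · calc ∑' j, (v j) ^ 2 * ‖T j f‖ ^ 2
        ≤ ∑' j, Ebd * ((v j) ^ 2 * ‖Λ j (_root_.proj (W j) f)‖ ^ 2) :=
          Summable.tsum_le_tsum hterm hST ((hsum f).mul_left Ebd)
      _ = Ebd * ∑' j, (v j) ^ 2 * ‖Λ j (_root_.proj (W j) f)‖ ^ 2 := tsum_mul_left
      _ ≤ Ebd * (D * ‖f‖ ^ 2) := mul_le_mul_of_nonneg_left (hframe f).2 hEbd0
      _ = D * Ebd * ‖f‖ ^ 2 := by ring
end

section
/- Let K ∈ B(H). A family Λ = {(W_j, Λ_j, v_j)}_{j∈J} is a g-atomic subspace of H with respect to K if and only if Λ is a K-g-fusion frame for H. -/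
open ContinuousLinearMap
open scoped ENNReal

set_option linter.unusedSectionVars false
set_option maxHeartbeats 1000000

section Aux

variable {ι E : Type*} [NormedAddCommGroup E] [InnerProductSpace ℂ E] [CompleteSpace E]
    {G : ι → Type*} [∀ j, NormedAddCommGroup (G j)] [∀ j, InnerProductSpace ℂ (G j)]
    [∀ j, CompleteSpace (G j)]
    (W : ι → Submodule ℂ E) [∀ j, CompleteSpace (W j)]
    (v : ι → ℝ) (Λ : ∀ j, E →L[ℂ] G j)

lemma rpow_two_eq (x : ℝ) : x ^ (2 : ℝ≥0∞).toReal = x ^ (2 : ℕ) := by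
  rw [ENNReal.toReal_ofNat, ← Real.rpow_natCast x 2]
  norm_num

lemma mem_aux (f : E) (hs : Summable (fun j => (v j) ^ 2 * ‖Λ j (proj (W j) f)‖ ^ 2)) :
    Memℓp (fun j => ((v j : ℂ)) • Λ j (proj (W j) f)) 2 := by
  apply memℓp_gen
  have : (fun j => ‖((v j : ℂ)) • Λ j (proj (W j) f)‖ ^ (2 : ℝ≥0∞).toReal)
      = fun j => (v j) ^ 2 * ‖Λ j (proj (W j) f)‖ ^ 2 := by
    funext j
    rw [rpow_two_eq, norm_smul]
    simp [mul_pow, sq_abs]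
  rw [this]
  exact hs

end Aux

set_option linter.unusedSectionVars false
set_option maxHeartbeats 1000000

section Aux2

variable {ι E : Type*} [NormedAddCommGroup E] [InnerProductSpace ℂ E] [CompleteSpace E]
    {G : ι → Type*} [∀ j, NormedAddCommGroup (G j)] [∀ j, InnerProductSpace ℂ (G j)]
    [∀ j, CompleteSpace (G j)]
    (W : ι → Submodule ℂ E) [∀ j, CompleteSpace (W j)]
    (v : ι → ℝ) (Λ : ∀ j, E →L[ℂ] G j)
    (B : ℝ) (hB0 : 0 ≤ B)
    (hB : ∀ f : E, Summable (fun j => (v j) ^ 2 * ‖Λ j (proj (W j) f)‖ ^ 2) ∧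
        ∑' j, (v j) ^ 2 * ‖Λ j (proj (W j) f)‖ ^ 2 ≤ B * ‖f‖ ^ 2)

noncomputable def anOp : E →L[ℂ] lp G 2 :=
  LinearMap.mkContinuous
    { toFun := fun f => (⟨fun j => ((v j : ℂ)) • Λ j (proj (W j) f),
        mem_aux W v Λ f (hB f).1⟩ : lp G 2)
      map_add' := by
        intro x y
        apply Subtype.ext
        funext j
        show ((v j : ℂ)) • Λ j (proj (W j) (x + y)) = _
        rw [map_add, map_add, smul_add]
        rfl
      map_smul' := by
        intro c x
        apply Subtype.ext
        funext j
        have : ((c • x : E)) = c • x := rfl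
        show ((v j : ℂ)) • Λ j (proj (W j) (c • x)) = c • ((v j : ℂ)) • Λ j (proj (W j) x)
        rw [map_smul, map_smul, smul_comm] }
    (Real.sqrt B)
    (by
      intro f
      dsimp
      have h2 : (0:ℝ) < (2 : ℝ≥0∞).toReal := by norm_num
      have hn := lp.norm_rpow_eq_tsum h2
        (⟨fun j => ((v j : ℂ)) • Λ j (proj (W j) f), mem_aux W v Λ f (hB f).1⟩ : lp G 2)
      set u : lp G 2 := (⟨fun j => ((v j : ℂ)) • Λ j (proj (W j) f),
        mem_aux W v Λ f (hB f).1⟩ : lp G 2) with hu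
      have hcoe : ∀ j, (u : ∀ j, G j) j = ((v j : ℂ)) • Λ j (proj (W j) f) := fun j => rfl
      have hn2 : ‖u‖ ^ (2:ℕ) = ∑' j, (v j) ^ 2 * ‖Λ j (proj (W j) f)‖ ^ 2 := by
        rw [← rpow_two_eq, hn]
        congr 1
        funext j
        rw [hcoe j, rpow_two_eq, norm_smul]
        simp [mul_pow, sq_abs]
      have hle : ‖u‖ ^ 2 ≤ B * ‖f‖ ^ 2 := by
        rw [hn2]; exact (hB f).2
      calc ‖u‖ = Real.sqrt (‖u‖ ^ 2) := by rw [Real.sqrt_sq (norm_nonneg _)]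
        _ ≤ Real.sqrt (B * ‖f‖ ^ 2) := Real.sqrt_le_sqrt hle
        _ = Real.sqrt B * ‖f‖ := by
            rw [Real.sqrt_mul hB0, Real.sqrt_sq (norm_nonneg _)])

lemma anOp_apply (f : E) (j : ι) :
    (anOp W v Λ B hB0 hB f : ∀ j, G j) j = ((v j : ℂ)) • Λ j (proj (W j) f) := rfl

lemma anOp_norm_sq (f : E) :
    ‖anOp W v Λ B hB0 hB f‖ ^ 2 = ∑' j, (v j) ^ 2 * ‖Λ j (proj (W j) f)‖ ^ 2 := by
  have h2 : (0:ℝ) < (2 : ℝ≥0∞).toReal := by norm_num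
  have hn := lp.norm_rpow_eq_tsum h2 (anOp W v Λ B hB0 hB f)
  rw [← rpow_two_eq, hn]
  congr 1
  funext j
  rw [anOp_apply, rpow_two_eq, norm_smul]
  simp [mul_pow, sq_abs]


lemma real_coe_smul {F : Type*} [NormedAddCommGroup F] [InnerProductSpace ℂ F]
    (r : ℝ) (x : F) : ((r : ℂ)) • x = r • x := by
  rw [← algebraMap_smul ℂ r x, Complex.coe_algebraMap]

lemma key_inner (h : E) (j : ι) (x : G j) :
    (inner ℂ h (v j • proj (W j) ((ContinuousLinearMap.adjoint (Λ j)) x)))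
      = inner ℂ (((v j : ℂ)) • Λ j (proj (W j) h)) x := by
  rw [← real_coe_smul, inner_smul_right, inner_smul_left, Complex.conj_ofReal]
  congr 1
  show (inner ℂ h ((W j).starProjection ((ContinuousLinearMap.adjoint (Λ j)) x))) = _
  rw [← Submodule.inner_starProjection_left_eq_right]
  exact ContinuousLinearMap.adjoint_inner_right _ _ _

lemma anOp_adjoint_hasSum (g : lp G 2) :
    HasSum (fun j => v j • proj (W j) ((ContinuousLinearMap.adjoint (Λ j)) ((g : ∀ j, G j) j)))
      (ContinuousLinearMap.adjoint (anOp W v Λ B hB0 hB) g) := by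
  classical
  set U := anOp W v Λ B hB0 hB with hU
  have hone : ∀ j, v j • proj (W j) ((ContinuousLinearMap.adjoint (Λ j)) ((g : ∀ j, G j) j))
      = ContinuousLinearMap.adjoint U (lp.single 2 j ((g : ∀ j, G j) j)) := by
    intro j
    apply ext_inner_left ℂ
    intro h
    rw [ContinuousLinearMap.adjoint_inner_right, key_inner, lp.inner_single_right]
    rfl
  have h2 := lp.hasSum_single (by norm_num : (2 : ℝ≥0∞) ≠ ⊤) g
  have h3 := h2.mapL (ContinuousLinearMap.adjoint U)
  simpa only [hone] using h3


lemma douglas (K : E →L[ℂ] E) (A : ℝ) (hA0 : 0 < A)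
    (hA : ∀ f : E, A * ‖ContinuousLinearMap.adjoint K f‖ ^ 2 ≤
        ∑' j, (v j) ^ 2 * ‖Λ j (proj (W j) f)‖ ^ 2) :
    ∃ V : lp G 2 →L[ℂ] E, ∀ f : E,
      V (anOp W v Λ B hB0 hB f) = ContinuousLinearMap.adjoint K f := by
  classical
  set U := anOp W v Λ B hB0 hB with hUdef
  set c : ℝ := Real.sqrt A⁻¹ with hc
  have hc0 : 0 ≤ c := Real.sqrt_nonneg _
  have hle : ∀ f : E, ‖ContinuousLinearMap.adjoint K f‖ ≤ c * ‖U f‖ := by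
    intro f
    have h1 : A * ‖ContinuousLinearMap.adjoint K f‖ ^ 2 ≤ ‖U f‖ ^ 2 := by
      rw [anOp_norm_sq W v Λ B hB0 hB f]; exact hA f
    have h2 : ‖ContinuousLinearMap.adjoint K f‖ ^ 2 ≤ (c * ‖U f‖) ^ 2 := by
      rw [mul_pow, hc, Real.sq_sqrt (inv_nonneg.mpr hA0.le)]
      calc ‖ContinuousLinearMap.adjoint K f‖ ^ 2
          = A⁻¹ * (A * ‖ContinuousLinearMap.adjoint K f‖ ^ 2) := by
            field_simp
        _ ≤ A⁻¹ * ‖U f‖ ^ 2 :=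
            mul_le_mul_of_nonneg_left h1 (inv_nonneg.mpr hA0.le)
    calc ‖ContinuousLinearMap.adjoint K f‖
        = Real.sqrt (‖ContinuousLinearMap.adjoint K f‖ ^ 2) := by
          rw [Real.sqrt_sq (norm_nonneg _)]
      _ ≤ Real.sqrt ((c * ‖U f‖) ^ 2) := Real.sqrt_le_sqrt h2
      _ = c * ‖U f‖ := Real.sqrt_sq (by positivity)
  have hker : ∀ f f' : E, U f = U f' →
      ContinuousLinearMap.adjoint K f = ContinuousLinearMap.adjoint K f' := by
    intro f f' h
    have h1 := hle (f - f')
    rw [map_sub, map_sub, h, sub_self, norm_zero, mul_zero] at h1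
    have h2 : ContinuousLinearMap.adjoint K f - ContinuousLinearMap.adjoint K f' = 0 :=
      norm_le_zero_iff.mp h1
    exact sub_eq_zero.mp h2
  set R : Submodule ℂ (lp G 2) := LinearMap.range (U.toLinearMap) with hR
  have memR : ∀ y : R, ∃ f : E, U f = (y : lp G 2) := fun y => LinearMap.mem_range.mp y.2
  set φ : R → E := fun y => ContinuousLinearMap.adjoint K ((memR y).choose) with hφ
  have hphi : ∀ (y : R) (f : E), U f = (y : lp G 2) → φ y = ContinuousLinearMap.adjoint K f := by
    intro y f hf
    exact hker _ _ ((memR y).choose_spec.trans hf.symm)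
  set V₀ : R →ₗ[ℂ] E :=
    { toFun := φ
      map_add' := by
        intro y z
        obtain ⟨f, hf⟩ := memR y
        obtain ⟨f', hf'⟩ := memR z
        rw [hphi y f hf, hphi z f' hf', hphi (y + z) (f + f')
          (by rw [map_add, hf, hf']; rfl), map_add]
      map_smul' := by
        intro a y
        obtain ⟨f, hf⟩ := memR y
        show φ (a • y) = (RingHom.id ℂ) a • φ y
        rw [hphi y f hf, hphi (a • y) (a • f) (by rw [map_smul, hf]; rfl), map_smul]
        rfl }
    with hV₀def
  have hV₀ : ∀ y : R, ‖V₀ y‖ ≤ c * ‖y‖ := by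
    intro y
    obtain ⟨f, hf⟩ := memR y
    have h1 : V₀ y = ContinuousLinearMap.adjoint K f := hphi y f hf
    have h2 : ‖U f‖ = ‖y‖ := by rw [hf]; rfl
    rw [h1, ← h2]; exact hle f
  set V₁ : R →L[ℂ] E := V₀.mkContinuous c hV₀ with hV₁def
  set M : Submodule ℂ (lp G 2) := R.topologicalClosure with hM
  haveI : CompleteSpace M := R.isClosed_topologicalClosure.completeSpace_coe
  set eₗ : R →ₗ[ℂ] M := Submodule.inclusion R.le_topologicalClosure with heₗ
  have heiso : ∀ y : R, ‖eₗ y‖ = ‖y‖ := fun y => rfl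
  set e : R →L[ℂ] M := eₗ.mkContinuous 1 (fun y => by rw [heiso, one_mul]) with hedef
  have h_e : IsUniformInducing e :=
    (AddMonoidHomClass.isometry_of_norm e (fun y => heiso y)).isUniformInducing
  have h_dense : DenseRange e := by
    intro z
    have h1 : Set.range e = {w : M | (w : lp G 2) ∈ R} := by
      ext w
      constructor
      · rintro ⟨y, rfl⟩; exact y.2
      · intro hw; exact ⟨⟨(w : lp G 2), hw⟩, rfl⟩
    rw [h1]
    rw [closure_subtype]
    have h2 : ((↑) : M → lp G 2) '' {w : M | (w : lp G 2) ∈ R} = (R : Set (lp G 2)) := by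
      ext x
      constructor
      · rintro ⟨w, hw, rfl⟩; exact hw
      · intro hx; exact ⟨⟨x, R.le_topologicalClosure hx⟩, hx, rfl⟩
    rw [h2]
    exact z.2
  set V₂ : M →L[ℂ] E := V₁.extend e with hV₂def
  set V : lp G 2 →L[ℂ] E := V₂.comp (M.subtypeL.adjoint) with hVdef
  refine ⟨V, fun f => ?_⟩
  have hmemR : U f ∈ R := LinearMap.mem_range.mpr ⟨f, rfl⟩
  have hmemM : U f ∈ M := R.le_topologicalClosure hmemR
  have hproj : ContinuousLinearMap.adjoint (M.subtypeL) (U f) = ⟨U f, hmemM⟩ := by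
    rw [Submodule.adjoint_subtypeL]
    apply Subtype.ext
    exact Submodule.starProjection_eq_self_iff.mpr hmemM
  have hinc : (⟨U f, hmemM⟩ : M) = e ⟨U f, hmemR⟩ := rfl
  have : V (U f) = V₂ (e ⟨U f, hmemR⟩) := by
    rw [hVdef]
    simp only [ContinuousLinearMap.comp_apply]
    rw [hproj, hinc]
  rw [this, hV₂def, ContinuousLinearMap.extend_eq _ h_dense h_e]
  exact hphi ⟨U f, hmemR⟩ f rfl

end Aux2

/-- Λ is a g-atomic subspace of H with respect to K iff Λ is a
K-g-fusion frame for H. -/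
theorem stmt5 {ι E : Type*} [NormedAddCommGroup E] [InnerProductSpace ℂ E] [CompleteSpace E]
    {G : ι → Type*} [∀ j, NormedAddCommGroup (G j)] [∀ j, InnerProductSpace ℂ (G j)]
    [∀ j, CompleteSpace (G j)]
    (W : ι → Submodule ℂ E) [∀ j, CompleteSpace (W j)]
    (v : ι → ℝ) (hv : ∀ j, 0 < v j)
    (Λ : ∀ j, E →L[ℂ] G j) (K : E →L[ℂ] E) :
    ((∃ B > (0 : ℝ), ∀ f : E,
        Summable (fun j => (v j) ^ 2 * ‖Λ j (proj (W j) f)‖ ^ 2) ∧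
        ∑' j, (v j) ^ 2 * ‖Λ j (proj (W j) f)‖ ^ 2 ≤ B * ‖f‖ ^ 2) ∧
      ∃ C > (0 : ℝ), ∀ f : E, ∃ g : lp G 2,
        HasSum (fun j => v j • proj (W j)
          (ContinuousLinearMap.adjoint (Λ j) ((g : ∀ j, G j) j))) (K f) ∧
        ‖g‖ ≤ C * ‖f‖) ↔
    (∃ A > (0 : ℝ), ∃ B > (0 : ℝ), ∀ f : E,
      Summable (fun j => (v j) ^ 2 * ‖Λ j (proj (W j) f)‖ ^ 2) ∧
      A * ‖ContinuousLinearMap.adjoint K f‖ ^ 2 ≤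
        ∑' j, (v j) ^ 2 * ‖Λ j (proj (W j) f)‖ ^ 2 ∧
      ∑' j, (v j) ^ 2 * ‖Λ j (proj (W j) f)‖ ^ 2 ≤ B * ‖f‖ ^ 2) := by
  constructor
  · rintro ⟨⟨B, hB0, hB⟩, ⟨C, hC0, hC⟩⟩
    refine ⟨(C ^ 2)⁻¹, by positivity, B, hB0, fun f => ?_⟩
    refine ⟨(hB f).1, ?_, (hB f).2⟩
    set U := anOp W v Λ B hB0.le hB with hU
    set a := ContinuousLinearMap.adjoint K f with ha
    obtain ⟨g, hg1, hg2⟩ := hC a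
    have key : (inner ℂ a a) = inner ℂ (U f) g := by
      have h1 : (inner ℂ a a) = inner ℂ f (K a) :=
        ContinuousLinearMap.adjoint_inner_left K a f
      have h2 := hg1.mapL (innerSL ℂ f)
      have h3 : ∀ j, innerSL ℂ f (v j • proj (W j)
          (ContinuousLinearMap.adjoint (Λ j) ((g : ∀ j, G j) j)))
          = inner ℂ ((U f : ∀ j, G j) j) ((g : ∀ j, G j) j) := by
        intro j
        exact key_inner W v Λ f j ((g : ∀ j, G j) j)
      have h4 : HasSum (fun j => (inner ℂ ((U f : ∀ j, G j) j) ((g : ∀ j, G j) j)))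
          (inner ℂ f (K a)) := by
        simp only [h3] at h2
        exact h2
      rw [h1]
      exact h4.unique (lp.hasSum_inner (U f) g)
    have hnormsq : ‖a‖ ^ 2 ≤ ‖U f‖ * ‖g‖ := by
      have h5 : ‖a‖ ^ 2 = RCLike.re (inner ℂ a a) := (inner_self_eq_norm_sq a).symm
      rw [h5, key]
      calc RCLike.re (inner ℂ (U f) g) ≤ ‖(inner ℂ (U f) g)‖ := RCLike.re_le_norm _
        _ ≤ ‖U f‖ * ‖g‖ := norm_inner_le_norm _ _
    have hUsq : ‖U f‖ ^ 2 = ∑' j, (v j) ^ 2 * ‖Λ j (proj (W j) f)‖ ^ 2 :=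
      anOp_norm_sq W v Λ B hB0.le hB f
    rw [← hUsq]
    rcases eq_or_lt_of_le (norm_nonneg a) with h0 | h0
    · rw [← h0]
      simpa using sq_nonneg ‖U f‖
    · have h6 : ‖a‖ ^ 2 ≤ ‖U f‖ * (C * ‖a‖) :=
        hnormsq.trans (mul_le_mul_of_nonneg_left hg2 (norm_nonneg _))
      have h7 : ‖a‖ ≤ C * ‖U f‖ := by nlinarith
      have h8 : ‖a‖ ^ 2 ≤ C ^ 2 * ‖U f‖ ^ 2 := by nlinarith
      rw [inv_mul_le_iff₀ (by positivity)]
      linarith [h8]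
  · rintro ⟨A, hA0, B, hB0, hfr⟩
    have hB : ∀ f : E, Summable (fun j => (v j) ^ 2 * ‖Λ j (proj (W j) f)‖ ^ 2) ∧
        ∑' j, (v j) ^ 2 * ‖Λ j (proj (W j) f)‖ ^ 2 ≤ B * ‖f‖ ^ 2 :=
      fun f => ⟨(hfr f).1, (hfr f).2.2⟩
    refine ⟨⟨B, hB0, hB⟩, ?_⟩
    obtain ⟨V, hV⟩ := douglas W v Λ B hB0.le hB K A hA0 (fun f => (hfr f).2.1)
    set U := anOp W v Λ B hB0.le hB with hU
    have hcomp : V.comp U = ContinuousLinearMap.adjoint K := ContinuousLinearMap.ext hV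
    have hK : K = (ContinuousLinearMap.adjoint U).comp (ContinuousLinearMap.adjoint V) := by
      calc K = ContinuousLinearMap.adjoint (ContinuousLinearMap.adjoint K) :=
            (adjoint_adjoint K).symm
        _ = ContinuousLinearMap.adjoint (V.comp U) := by rw [hcomp]
        _ = (ContinuousLinearMap.adjoint U).comp (ContinuousLinearMap.adjoint V) :=
            adjoint_comp V U
    refine ⟨‖ContinuousLinearMap.adjoint V‖ + 1, by positivity, fun f => ?_⟩
    refine ⟨ContinuousLinearMap.adjoint V f, ?_, ?_⟩
    · have h1 := anOp_adjoint_hasSum W v Λ B hB0.le hB (ContinuousLinearMap.adjoint V f)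
      have h2 : K f = ContinuousLinearMap.adjoint U (ContinuousLinearMap.adjoint V f) := by
        rw [hK]; rfl
      rw [h2]
      exact h1
    · calc ‖ContinuousLinearMap.adjoint V f‖ ≤ ‖ContinuousLinearMap.adjoint V‖ * ‖f‖ :=
          le_opNorm _ _
        _ ≤ (‖ContinuousLinearMap.adjoint V‖ + 1) * ‖f‖ := by
            have := norm_nonneg f
            nlinarith
end

section
/- Let Λ, Γ be g-fusion Bessel sequences in H with bounds D₁, D₂ and frame operator S_{ΓΛ}. If there exists λ ∈ [0,1) with ‖f − S_{ΓΛ} f‖ ≤ λ‖f‖ for all f ∈ H, then both Λ and Γ are g-fusion frames for H; in particular Γ has lower bound (1−λ)²/D₁ and upper bound D₂. -/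
open ContinuousLinearMap

set_option maxHeartbeats 1000000
/-- if ‖f − S_{ΓΛ} f‖ ≤ λ‖f‖ with λ ∈ [0,1), then both Λ and Γ are g-fusion
frames; in particular Γ has bounds (1−λ)²/D₁ and D₂. -/
theorem stmt13
    {ι E : Type*} [NormedAddCommGroup E] [InnerProductSpace ℂ E] [CompleteSpace E]
    {G : ι → Type*} [∀ j, NormedAddCommGroup (G j)] [∀ j, InnerProductSpace ℂ (G j)]
    [∀ j, CompleteSpace (G j)]
    (W V' : ι → Submodule ℂ E) [∀ j, CompleteSpace (W j)] [∀ j, CompleteSpace (V' j)]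
    (w v : ι → ℝ) (hw : ∀ j, 0 < w j) (hv : ∀ j, 0 < v j)
    (Λ Γ : ∀ j, E →L[ℂ] G j)
    (D₁ D₂ : ℝ)
    (hΛ : ∀ f : E, Summable (fun j => (w j) ^ 2 * ‖Λ j (proj (W j) f)‖ ^ 2) ∧
      ∑' j, (w j) ^ 2 * ‖Λ j (proj (W j) f)‖ ^ 2 ≤ D₁ * ‖f‖ ^ 2)
    (hΓ : ∀ f : E, Summable (fun j => (v j) ^ 2 * ‖Γ j (proj (V' j) f)‖ ^ 2) ∧
      ∑' j, (v j) ^ 2 * ‖Γ j (proj (V' j) f)‖ ^ 2 ≤ D₂ * ‖f‖ ^ 2)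
    (S : E →L[ℂ] E)
    (hS : ∀ f : E, HasSum
      (fun j => (v j * w j) • proj (V' j)
        (ContinuousLinearMap.adjoint (Γ j) (Λ j (proj (W j) f)))) (S f))
    (lam : ℝ) (h0 : 0 ≤ lam) (h1 : lam < 1)
    (hper : ∀ f : E, ‖f - S f‖ ≤ lam * ‖f‖) :
    (∃ A > (0 : ℝ), ∀ f : E,
        A * ‖f‖ ^ 2 ≤ ∑' j, (w j) ^ 2 * ‖Λ j (proj (W j) f)‖ ^ 2 ∧
        ∑' j, (w j) ^ 2 * ‖Λ j (proj (W j) f)‖ ^ 2 ≤ D₁ * ‖f‖ ^ 2) ∧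
    ∀ f : E,
      (1 - lam) ^ 2 / D₁ * ‖f‖ ^ 2 ≤ ∑' j, (v j) ^ 2 * ‖Γ j (proj (V' j) f)‖ ^ 2 ∧
      ∑' j, (v j) ^ 2 * ‖Γ j (proj (V' j) f)‖ ^ 2 ≤ D₂ * ‖f‖ ^ 2 := by
  -- nonnegativity of the two sums
  have hTΛ0 : ∀ f : E, 0 ≤ ∑' j, (w j) ^ 2 * ‖Λ j (proj (W j) f)‖ ^ 2 := fun f =>
    tsum_nonneg fun j => by positivity
  have hTΓ0 : ∀ f : E, 0 ≤ ∑' j, (v j) ^ 2 * ‖Γ j (proj (V' j) f)‖ ^ 2 := fun f =>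
    tsum_nonneg fun j => by positivity
  -- trivial case
  by_cases hE : ∀ x : E, x = 0
  · refine ⟨⟨1, one_pos, fun f => ?_⟩, fun f => ?_⟩ <;>
      rw [hE f, norm_zero] <;>
      constructor
    · simpa using hTΛ0 0
    · simpa [hE] using (hΛ 0).2
    · simpa using hTΓ0 0
    · simpa [hE] using (hΓ 0).2
  push_neg at hE
  obtain ⟨f₀, hf₀⟩ := hE
  have hlam : (0:ℝ) < 1 - lam := by linarith
  -- Cauchy–Schwarz key estimate
  have key : ∀ f g : E, ‖(inner ℂ g (S f) : ℂ)‖ ≤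
      Real.sqrt (∑' j, (v j) ^ 2 * ‖Γ j (proj (V' j) g)‖ ^ 2) *
      Real.sqrt (∑' j, (w j) ^ 2 * ‖Λ j (proj (W j) f)‖ ^ 2) := by
    intro f g
    set a : ι → ℝ := fun j => v j * ‖Γ j (proj (V' j) g)‖ with ha
    set b : ι → ℝ := fun j => w j * ‖Λ j (proj (W j) f)‖ with hb
    have hap : ∀ j, 0 ≤ a j := fun j => mul_nonneg (hv j).le (norm_nonneg _)
    have hbp : ∀ j, 0 ≤ b j := fun j => mul_nonneg (hw j).le (norm_nonneg _)
    have hr2 : ∀ x : ℝ, x ^ (2:ℝ) = x ^ 2 := fun x => by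
      rw [show (2:ℝ) = ((2:ℕ):ℝ) by norm_num, Real.rpow_natCast]
    have hsa : Summable fun j => a j ^ (2:ℝ) := by
      simp_rw [hr2, ha, mul_pow]; exact (hΓ g).1
    have hsb : Summable fun j => b j ^ (2:ℝ) := by
      simp_rw [hr2, hb, mul_pow]; exact (hΛ f).1
    have hconj : Real.HolderConjugate 2 2 := Real.HolderConjugate.two_two
    have holder := Real.summable_and_inner_le_Lp_mul_Lq_tsum_of_nonneg hconj hap hbp hsa hsb
    have hterm : ∀ j, ‖(inner ℂ g ((v j * w j) • proj (V' j)
        (ContinuousLinearMap.adjoint (Γ j) (Λ j (proj (W j) f)))) : ℂ)‖ ≤ a j * b j := by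
      intro j
      rw [RCLike.real_smul_eq_coe_smul (K := ℂ), inner_smul_right, norm_mul,
        RCLike.norm_ofReal, abs_of_nonneg (mul_nonneg (hv j).le (hw j).le)]
      have hip : (inner ℂ g (proj (V' j)
          (ContinuousLinearMap.adjoint (Γ j) (Λ j (proj (W j) f)))) : ℂ)
          = inner ℂ (Γ j (proj (V' j) g)) (Λ j (proj (W j) f)) := by
        simp only [_root_.proj, ContinuousLinearMap.comp_apply, Submodule.subtypeL_apply]
        simp only [← Submodule.starProjection_apply]
        rw [← Submodule.inner_starProjection_left_eq_right,
          ContinuousLinearMap.adjoint_inner_right]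
      rw [hip, ha, hb]
      have h2 := norm_inner_le_norm (𝕜 := ℂ) (Γ j (proj (V' j) g)) (Λ j (proj (W j) f))
      have := mul_le_mul_of_nonneg_left h2 (mul_nonneg (hv j).le (hw j).le)
      calc v j * w j * ‖(inner ℂ (Γ j (proj (V' j) g)) (Λ j (proj (W j) f)) : ℂ)‖
          ≤ v j * w j * (‖Γ j (proj (V' j) g)‖ * ‖Λ j (proj (W j) f)‖) := this
        _ = v j * ‖Γ j (proj (V' j) g)‖ * (w j * ‖Λ j (proj (W j) f)‖) := by ring
    have hsum_inner : HasSum (fun j => (inner ℂ g ((v j * w j) • proj (V' j)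
        (ContinuousLinearMap.adjoint (Γ j) (Λ j (proj (W j) f)))) : ℂ)) (inner ℂ g (S f)) :=
      (hS f).mapL (innerSL ℂ g)
    have hsnorm : Summable fun j => ‖(inner ℂ g ((v j * w j) • proj (V' j)
        (ContinuousLinearMap.adjoint (Γ j) (Λ j (proj (W j) f)))) : ℂ)‖ :=
      Summable.of_nonneg_of_le (fun j => norm_nonneg _) hterm holder.1
    calc ‖(inner ℂ g (S f) : ℂ)‖
        = ‖∑' j, (inner ℂ g ((v j * w j) • proj (V' j)
            (ContinuousLinearMap.adjoint (Γ j) (Λ j (proj (W j) f)))) : ℂ)‖ := by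
          rw [hsum_inner.tsum_eq]
      _ ≤ ∑' j, ‖(inner ℂ g ((v j * w j) • proj (V' j)
            (ContinuousLinearMap.adjoint (Γ j) (Λ j (proj (W j) f)))) : ℂ)‖ :=
          norm_tsum_le_tsum_norm hsnorm
      _ ≤ ∑' j, a j * b j := Summable.tsum_le_tsum hterm hsnorm holder.1
      _ ≤ (∑' j, a j ^ (2:ℝ)) ^ (1/(2:ℝ)) * (∑' j, b j ^ (2:ℝ)) ^ (1/(2:ℝ)) := holder.2
      _ = Real.sqrt (∑' j, (v j) ^ 2 * ‖Γ j (proj (V' j) g)‖ ^ 2) *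
          Real.sqrt (∑' j, (w j) ^ 2 * ‖Λ j (proj (W j) f)‖ ^ 2) := by
          rw [Real.sqrt_eq_rpow, Real.sqrt_eq_rpow]
          congr 2 <;> · apply tsum_congr; intro j; rw [hr2]; ring
    -- end key
  have hSlow : ∀ f : E, (1 - lam) * ‖f‖ ≤ ‖S f‖ := by
    intro f
    have h2 := hper f
    have h3 : ‖f‖ - ‖S f‖ ≤ ‖f - S f‖ := norm_sub_norm_le _ _
    nlinarith [norm_nonneg f]
  -- ‖S f‖² as an inner product
  have hSsq : ∀ f : E, ‖S f‖ ^ 2 = ‖(inner ℂ (S f) (S f) : ℂ)‖ := by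
    intro f
    rw [inner_self_eq_norm_sq_to_K, norm_pow, RCLike.norm_ofReal, abs_norm]
  -- positivity of D₂
  have hD₂ : 0 < D₂ := by
    by_contra h
    push_neg at h
    have hz : ∑' j, (v j) ^ 2 * ‖Γ j (proj (V' j) (S f₀))‖ ^ 2 = 0 :=
      le_antisymm (le_trans (hΓ (S f₀)).2 (by nlinarith [sq_nonneg ‖S f₀‖])) (hTΓ0 _)
    have hk := key f₀ (S f₀)
    rw [← hSsq f₀, hz, Real.sqrt_zero, zero_mul] at hk
    have h5 := hSlow f₀
    have h7 : ‖S f₀‖ = 0 := pow_eq_zero_iff (n := 2) (by norm_num) |>.mp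
      (le_antisymm hk (sq_nonneg _))
    have h6 : ‖f₀‖ ≤ 0 := by nlinarith [norm_nonneg f₀]
    exact hf₀ (norm_eq_zero.mp (le_antisymm h6 (norm_nonneg _)))
  -- positivity of D₁
  have hD₁ : 0 < D₁ := by
    by_contra h
    push_neg at h
    have hz : ∑' j, (w j) ^ 2 * ‖Λ j (proj (W j) f₀)‖ ^ 2 = 0 :=
      le_antisymm (le_trans (hΛ f₀).2 (by nlinarith [sq_nonneg ‖f₀‖])) (hTΛ0 _)
    have hk := key f₀ (S f₀)
    rw [← hSsq f₀, hz, Real.sqrt_zero, mul_zero] at hk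
    have h5 := hSlow f₀
    have h7 : ‖S f₀‖ = 0 := pow_eq_zero_iff (n := 2) (by norm_num) |>.mp
      (le_antisymm hk (sq_nonneg _))
    have h6 : ‖f₀‖ ≤ 0 := by nlinarith [norm_nonneg f₀]
    exact hf₀ (norm_eq_zero.mp (le_antisymm h6 (norm_nonneg _)))
  -- Λ lower bound
  have mainΛ : ∀ f : E, (1 - lam) ^ 2 / D₂ * ‖f‖ ^ 2 ≤
      ∑' j, (w j) ^ 2 * ‖Λ j (proj (W j) f)‖ ^ 2 := by
    intro f
    set TΛ := ∑' j, (w j) ^ 2 * ‖Λ j (proj (W j) f)‖ ^ 2 with hTΛ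
    have h2 : ‖S f‖ ^ 2 ≤ Real.sqrt (∑' j, (v j) ^ 2 * ‖Γ j (proj (V' j) (S f))‖ ^ 2) *
        Real.sqrt TΛ := by rw [hSsq f]; exact key f (S f)
    have h3 : Real.sqrt (∑' j, (v j) ^ 2 * ‖Γ j (proj (V' j) (S f))‖ ^ 2) ≤
        Real.sqrt D₂ * ‖S f‖ := by
      calc Real.sqrt (∑' j, (v j) ^ 2 * ‖Γ j (proj (V' j) (S f))‖ ^ 2)
          ≤ Real.sqrt (D₂ * ‖S f‖ ^ 2) := Real.sqrt_le_sqrt (hΓ (S f)).2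
        _ = Real.sqrt D₂ * ‖S f‖ := by
            rw [Real.sqrt_mul hD₂.le, Real.sqrt_sq (norm_nonneg _)]
    have h4 : (1 - lam) * ‖f‖ ≤ Real.sqrt D₂ * Real.sqrt TΛ := by
      rcases eq_or_lt_of_le (norm_nonneg (S f)) with hz | hp
      · have h5 := hSlow f
        rw [← hz] at h5
        have : ‖f‖ = 0 := by nlinarith [norm_nonneg f]
        rw [this, mul_zero]
        positivity
      · have h6 : ‖S f‖ * ‖S f‖ ≤ ‖S f‖ * (Real.sqrt D₂ * Real.sqrt TΛ) := by
          nlinarith [Real.sqrt_nonneg TΛ, Real.sqrt_nonneg D₂]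
        have h7 : ‖S f‖ ≤ Real.sqrt D₂ * Real.sqrt TΛ := le_of_mul_le_mul_left h6 hp
        exact le_trans (hSlow f) h7
    have h8 : ((1 - lam) * ‖f‖) ^ 2 ≤ (Real.sqrt D₂ * Real.sqrt TΛ) ^ 2 := by
      apply sq_le_sq' _ h4
      nlinarith [norm_nonneg f, Real.sqrt_nonneg D₂, Real.sqrt_nonneg TΛ]
    have h9 : (Real.sqrt D₂ * Real.sqrt TΛ) ^ 2 = D₂ * TΛ := by
      rw [mul_pow, Real.sq_sqrt hD₂.le, Real.sq_sqrt (hTΛ0 f)]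
    rw [h9] at h8
    rw [div_mul_eq_mul_div, div_le_iff₀ hD₂]
    nlinarith [h8]
  -- Γ lower bound, via the adjoint
  have hadj : ∀ g : E, (1 - lam) * ‖g‖ ≤ ‖ContinuousLinearMap.adjoint S g‖ := by
    intro g
    have hT : ‖(1 : E →L[ℂ] E) - S‖ ≤ lam :=
      opNorm_le_bound _ h0 fun x => by simpa using hper x
    have hTA : ‖ContinuousLinearMap.adjoint ((1 : E →L[ℂ] E) - S)‖ ≤ lam := by
      rwa [LinearIsometryEquiv.norm_map]
    have h2 : ‖g - ContinuousLinearMap.adjoint S g‖ ≤ lam * ‖g‖ := by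
      have hone : ContinuousLinearMap.adjoint (1 : E →L[ℂ] E) = 1 := by
        rw [ContinuousLinearMap.one_def, ContinuousLinearMap.adjoint_id]
      have harg : (ContinuousLinearMap.adjoint ((1 : E →L[ℂ] E) - S)) g =
          g - ContinuousLinearMap.adjoint S g := by
        rw [map_sub, hone]
        simp
      calc ‖g - ContinuousLinearMap.adjoint S g‖
          = ‖(ContinuousLinearMap.adjoint ((1 : E →L[ℂ] E) - S)) g‖ := by rw [harg]
        _ ≤ ‖ContinuousLinearMap.adjoint ((1 : E →L[ℂ] E) - S)‖ * ‖g‖ := le_opNorm _ g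
        _ ≤ lam * ‖g‖ := mul_le_mul_of_nonneg_right hTA (norm_nonneg g)
    have h3 : ‖g‖ - ‖ContinuousLinearMap.adjoint S g‖ ≤
        ‖g - ContinuousLinearMap.adjoint S g‖ := norm_sub_norm_le _ _
    nlinarith [norm_nonneg g]
  have mainΓ : ∀ g : E, (1 - lam) ^ 2 / D₁ * ‖g‖ ^ 2 ≤
      ∑' j, (v j) ^ 2 * ‖Γ j (proj (V' j) g)‖ ^ 2 := by
    intro g
    set u := ContinuousLinearMap.adjoint S g with hu
    set TΓ := ∑' j, (v j) ^ 2 * ‖Γ j (proj (V' j) g)‖ ^ 2 with hTΓ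
    have h2 : ‖u‖ ^ 2 ≤ Real.sqrt TΓ *
        Real.sqrt (∑' j, (w j) ^ 2 * ‖Λ j (proj (W j) u)‖ ^ 2) := by
      have hk := key u g
      have h5 : (inner ℂ g (S u) : ℂ) = inner ℂ u u :=
        (ContinuousLinearMap.adjoint_inner_left S u g).symm
      rw [h5] at hk
      have h6 : ‖(inner ℂ u u : ℂ)‖ = ‖u‖ ^ 2 := by
        rw [inner_self_eq_norm_sq_to_K, norm_pow, RCLike.norm_ofReal, abs_norm]
      rwa [h6] at hk
    have h3 : Real.sqrt (∑' j, (w j) ^ 2 * ‖Λ j (proj (W j) u)‖ ^ 2) ≤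
        Real.sqrt D₁ * ‖u‖ := by
      calc Real.sqrt (∑' j, (w j) ^ 2 * ‖Λ j (proj (W j) u)‖ ^ 2)
          ≤ Real.sqrt (D₁ * ‖u‖ ^ 2) := Real.sqrt_le_sqrt (hΛ u).2
        _ = Real.sqrt D₁ * ‖u‖ := by
            rw [Real.sqrt_mul hD₁.le, Real.sqrt_sq (norm_nonneg _)]
    have h4 : (1 - lam) * ‖g‖ ≤ Real.sqrt D₁ * Real.sqrt TΓ := by
      rcases eq_or_lt_of_le (norm_nonneg u) with hz | hp
      · have h5 := hadj g
        rw [← hu, ← hz] at h5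
        have : ‖g‖ = 0 := by nlinarith [norm_nonneg g]
        rw [this, mul_zero]
        positivity
      · have h6 : ‖u‖ * ‖u‖ ≤ ‖u‖ * (Real.sqrt D₁ * Real.sqrt TΓ) := by
          nlinarith [Real.sqrt_nonneg TΓ, Real.sqrt_nonneg D₁]
        have h7 : ‖u‖ ≤ Real.sqrt D₁ * Real.sqrt TΓ := le_of_mul_le_mul_left h6 hp
        exact le_trans (hadj g) h7
    have h8 : ((1 - lam) * ‖g‖) ^ 2 ≤ (Real.sqrt D₁ * Real.sqrt TΓ) ^ 2 := by
      apply sq_le_sq' _ h4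
      nlinarith [norm_nonneg g, Real.sqrt_nonneg D₁, Real.sqrt_nonneg TΓ]
    have h9 : (Real.sqrt D₁ * Real.sqrt TΓ) ^ 2 = D₁ * TΓ := by
      rw [mul_pow, Real.sq_sqrt hD₁.le, Real.sq_sqrt (hTΓ0 g)]
    rw [h9] at h8
    rw [div_mul_eq_mul_div, div_le_iff₀ hD₁]
    nlinarith [h8]
  refine ⟨⟨(1 - lam) ^ 2 / D₂, by positivity, fun f => ⟨mainΛ f, (hΛ f).2⟩⟩,
    fun f => ⟨mainΓ f, (hΓ f).2⟩⟩
end
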